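/- arXiv:2306.07258 — 3 statements merged into one kernel-verified Lean document; each statement's English description precedes it below -/
import Mathlib

section
/- Let U ⊆ ℝⁿ be open, m < n, and A : U → Matrix n m ℝ. If h : U → ℝⁿ is a C¹ map with invertible Jacobian J_h(q) for all q ∈ U such that the transformed generalized force satisfies (J_h(q)ᵀ)⁻¹ A(q) u = (u, 0_{n−m}) for every q ∈ U and every u ∈ ℝᵐ, then, writing h = (h_a, h_u) with h_a : U → ℝᵐ, the Jacobian of h_a satisfies J_{h_a}(q) = A(q)ᵀ for every q ∈ U; i.e., the passive output ẏ = A(q)ᵀq̇ is integrable with potential g = h_a. (Necessity part of Theorem 2, underactuated case.) -/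
open Matrix

/-- Jacobian matrix of a map between finite-dimensional coordinate spaces. -/
noncomputable def jac {ι κ : Type*} [Fintype ι] [DecidableEq ι] [Fintype κ]
    (g : (ι → ℝ) → (κ → ℝ)) (q : ι → ℝ) : Matrix κ ι ℝ :=
  Matrix.of fun i j => fderiv ℝ g q (Pi.single j 1) i

/-- **Necessity part of Theorem 2 (underactuated case `m < n`, `n = m + k`).**
If a C¹ change of coordinates `θ = h(q)` with invertible Jacobian transforms
the generalized force `A(q)u` into `(u, 0)` for all inputs `u ∈ ℝᵐ`, then
writing `h = (h_a, h_u)`, the Jacobian of `h_a` equals `A(q)ᵀ`; i.e. the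
passive output `A(q)ᵀ q̇` is integrable with potential `g = h_a`. -/
theorem underactuated_input_decoupling_necessity
    {m k : ℕ} (hk : 0 < k)
    {U : Set ((Fin m ⊕ Fin k) → ℝ)} (hU : IsOpen U)
    (A : ((Fin m ⊕ Fin k) → ℝ) → Matrix (Fin m ⊕ Fin k) (Fin m) ℝ)
    (h : ((Fin m ⊕ Fin k) → ℝ) → ((Fin m ⊕ Fin k) → ℝ))
    (hh : ContDiffOn ℝ 1 h U)
    (hJinv : ∀ q ∈ U, IsUnit (jac h q))
    (hdec : ∀ q ∈ U, ∀ u : Fin m → ℝ,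
      ((jac h q)ᵀ)⁻¹.mulVec ((A q).mulVec u) = Sum.elim u 0) :
    ∀ q ∈ U, jac (fun x => (fun i : Fin m => h x (Sum.inl i))) q = (A q)ᵀ := by
  intro q hq
  have hdiff : DifferentiableAt ℝ h q :=
    (hh.contDiffAt (hU.mem_nhds hq)).differentiableAt one_ne_zero
  -- invert the decoupling relation
  have hdet : IsUnit (jac h q)ᵀ.det := by
    rw [Matrix.det_transpose]
    exact (Matrix.isUnit_iff_isUnit_det _).mp (hJinv q hq)
  have key : ∀ u : Fin m → ℝ,
      (A q).mulVec u = (jac h q)ᵀ.mulVec (Sum.elim u 0) := by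
    intro u
    have := congrArg ((jac h q)ᵀ.mulVec) (hdec q hq u)
    rwa [Matrix.mulVec_mulVec, Matrix.mul_nonsing_inv _ hdet, Matrix.one_mulVec] at this
  ext a j
  -- compute the Jacobian of the projection composition
  have hproj : (fun x => (fun i : Fin m => h x (Sum.inl i)))
      = (ContinuousLinearMap.pi (fun i : Fin m =>
          ContinuousLinearMap.proj (R := ℝ) (φ := fun _ : Fin m ⊕ Fin k => ℝ) (Sum.inl i))) ∘ h := by
    funext x; rfl
  have hfd : fderiv ℝ (fun x => (fun i : Fin m => h x (Sum.inl i))) q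
      = (ContinuousLinearMap.pi (fun i : Fin m =>
          ContinuousLinearMap.proj (R := ℝ) (φ := fun _ : Fin m ⊕ Fin k => ℝ) (Sum.inl i))).comp
        (fderiv ℝ h q) := by
    rw [hproj, fderiv_comp q (ContinuousLinearMap.differentiableAt _) hdiff,
      ContinuousLinearMap.fderiv]
  have hAe : A q j a = jac h q (Sum.inl a) j := by
    have := congrFun (key (Pi.single a 1)) j
    have hsum : (Sum.elim (Pi.single a 1) (0 : Fin k → ℝ))
        = Pi.single (Sum.inl a) (1 : ℝ) := by
      funext x
      cases x with
      | inl b =>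
          simp [Pi.single_apply, Sum.inl.injEq]
      | inr c => simp [Pi.single_apply]
    rw [hsum] at this
    simpa [Matrix.mulVec_single, Matrix.transpose_apply] using this
  simp only [jac, Matrix.of_apply, hfd, Matrix.transpose_apply, hAe, jac]
  rfl
end

section
/- Let U, V ⊆ ℝⁿ be open, h : U → V a C² diffeomorphism with Jacobian J_h, and L : ℝⁿ × ℝⁿ → ℝ a C² Lagrangian. Define the transformed Lagrangian L_θ(θ, v) = L(h⁻¹(θ), J_h(h⁻¹(θ))⁻¹ v). If a C² curve q : I → U satisfies the Euler–Lagrange equations for L with generalized force τ : I → ℝⁿ, then the curve θ(t) = h(q(t)) satisfies the Euler–Lagrange equations for L_θ with generalized force τ_θ(t) = (J_h(q(t))ᵀ)⁻¹ τ(t); i.e., the Euler–Lagrange equations are invariant under changes of generalized coordinates, with forces transforming by the inverse-transpose Jacobian. (Property 2, first part.) -/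
open Matrix

/-- Gradient of a scalar function on a finite-dimensional coordinate space. -/
noncomputable def grad {ι : Type*} [Fintype ι] [DecidableEq ι]
    (f : (ι → ℝ) → ℝ) (q : ι → ℝ) : ι → ℝ :=
  fun i => fderiv ℝ f q (Pi.single i 1)

/-- The generalized-force side `d/dt ∂L/∂v − ∂L/∂q` of the Euler–Lagrange
equations for the Lagrangian `L` along the curve `q`, at time `t`. -/
noncomputable def ELForce {ι : Type*} [Fintype ι] [DecidableEq ι]
    (L : (ι → ℝ) → (ι → ℝ) → ℝ) (q : ℝ → ι → ℝ) (t : ℝ) : ι → ℝ :=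
  deriv (fun s => grad (fun w => L (q s) w) (deriv q s)) t
    - grad (fun x => L x (deriv q t)) (q t)

section helpers

variable {n : ℕ}

lemma pi_expand (z : Fin n → ℝ) : z = ∑ i, z i • (Pi.single i 1 : Fin n → ℝ) := by
  funext j
  simp [Finset.sum_apply, Pi.single_apply]

lemma jac_mulVec (f : (Fin n → ℝ) → (Fin n → ℝ)) (x v : Fin n → ℝ) :
    (jac f x).mulVec v = fderiv ℝ f x v := by
  have : fderiv ℝ f x v = ∑ j, v j • fderiv ℝ f x (Pi.single j 1) := by
    conv_lhs => rw [pi_expand v]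
    simp [map_sum]
  funext i
  rw [this]
  simp [jac, Matrix.mulVec, dotProduct, Finset.sum_apply, mul_comm]

lemma clm_expand_fst (A : ((Fin n → ℝ) × (Fin n → ℝ)) →L[ℝ] ℝ) (z : Fin n → ℝ) :
    A (z, 0) = ∑ i, z i * A (Pi.single i 1, 0) := by
  have : (z, (0 : Fin n → ℝ)) = ∑ i, z i • ((Pi.single i 1 : Fin n → ℝ), (0 : Fin n → ℝ)) := by
    rw [Prod.ext_iff]
    constructor
    · simp only [Prod.fst_sum, Prod.smul_mk]
      exact pi_expand z
    · simp [Prod.snd_sum]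
  rw [this, map_sum]
  simp only [_root_.map_smul, smul_eq_mul]

lemma clm_expand_snd (A : ((Fin n → ℝ) × (Fin n → ℝ)) →L[ℝ] ℝ) (z : Fin n → ℝ) :
    A (0, z) = ∑ i, z i * A (0, Pi.single i 1) := by
  have : ((0 : Fin n → ℝ), z) = ∑ i, z i • ((0 : Fin n → ℝ), (Pi.single i 1 : Fin n → ℝ)) := by
    rw [Prod.ext_iff]
    constructor
    · simp [Prod.fst_sum]
    · simp only [Prod.snd_sum, Prod.smul_mk]
      exact pi_expand z
  rw [this, map_sum]
  simp only [_root_.map_smul, smul_eq_mul]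

lemma fderiv_partial_snd {L : (Fin n → ℝ) → (Fin n → ℝ) → ℝ} {x v : Fin n → ℝ}
    (hf : DifferentiableAt ℝ (Function.uncurry L) (x, v)) :
    fderiv ℝ (fun w => L x w) v
      = (fderiv ℝ (Function.uncurry L) (x, v)).comp (ContinuousLinearMap.inr ℝ _ _) :=
  (hf.hasFDerivAt.comp v (hasFDerivAt_prodMk_right x v)).fderiv

lemma fderiv_partial_fst {L : (Fin n → ℝ) → (Fin n → ℝ) → ℝ} {x v : Fin n → ℝ}
    (hf : DifferentiableAt ℝ (Function.uncurry L) (x, v)) :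
    fderiv ℝ (fun y => L y v) x
      = (fderiv ℝ (Function.uncurry L) (x, v)).comp (ContinuousLinearMap.inl ℝ _ _) :=
  by have := (hf.hasFDerivAt.comp x (hasFDerivAt_prodMk_left (𝕜 := ℝ) x v)).fderiv; exact this

end helpers

/-- **Property 2, first part (invariance of the Euler–Lagrange equations).**
Under a C² change of coordinates `θ = h(q)` (a diffeomorphism of `U` onto
`V`, with C² inverse), solutions of the Euler–Lagrange equations for `L` with
generalized force `τ` map to solutions for the transformed Lagrangian
`L_θ(θ, v) = L(h⁻¹(θ), J_h(h⁻¹(θ))⁻¹ v)` with generalized force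
`τ_θ = (J_h(q)ᵀ)⁻¹ τ`. -/
theorem euler_lagrange_invariance_under_coordinate_change
    {n : ℕ} {U V : Set (Fin n → ℝ)} (hU : IsOpen U) (hV : IsOpen V)
    (h : (Fin n → ℝ) → (Fin n → ℝ))
    (hbij : Set.BijOn h U V)
    (hC2 : ContDiffOn ℝ 2 h U)
    (hinvC2 : ContDiffOn ℝ 2 (Function.invFunOn h U) V)
    (L : (Fin n → ℝ) → (Fin n → ℝ) → ℝ)
    (hL : ContDiff ℝ 2 (Function.uncurry L))
    (Lθ : (Fin n → ℝ) → (Fin n → ℝ) → ℝ)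
    (hLθ : ∀ θ v, Lθ θ v
      = L (Function.invFunOn h U θ)
          ((jac h (Function.invFunOn h U θ))⁻¹.mulVec v))
    (I : Set ℝ) (hI : IsOpen I)
    (q : ℝ → Fin n → ℝ) (hq : ContDiffOn ℝ 2 q I) (hqU : ∀ t ∈ I, q t ∈ U)
    (τ : ℝ → Fin n → ℝ)
    (hEL : ∀ t ∈ I, ELForce L q t = τ t) :
    ∀ t ∈ I, ELForce Lθ (fun s => h (q s)) t
      = ((jac h (q t))ᵀ)⁻¹.mulVec (τ t) := by
  intro t ht
  classical
  set g := Function.invFunOn h U with hgdef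
  have hinv : Set.InvOn g h U V := hbij.invOn_invFunOn
  have hgh : ∀ x ∈ U, g (h x) = x := fun x hx => hinv.1 hx
  have hhg : ∀ y ∈ V, h (g y) = y := fun y hy => hinv.2 hy
  have hgV : ∀ y ∈ V, g y ∈ U := by
    intro y hy
    obtain ⟨x, hx, rfl⟩ := hbij.surjOn hy
    rw [hgh x hx]; exact hx
  have hhC : ∀ x ∈ U, ContDiffAt ℝ 2 h x := fun x hx => hC2.contDiffAt (hU.mem_nhds hx)
  have hgC : ∀ y ∈ V, ContDiffAt ℝ 2 g y := fun y hy => hinvC2.contDiffAt (hV.mem_nhds hy)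
  have hqC : ∀ s ∈ I, ContDiffAt ℝ 2 q s := fun s hs => hq.contDiffAt (hI.mem_nhds hs)
  have hhD : ∀ x ∈ U, DifferentiableAt ℝ h x := fun x hx => (hhC x hx).differentiableAt two_ne_zero
  have hgD : ∀ y ∈ V, DifferentiableAt ℝ g y := fun y hy => (hgC y hy).differentiableAt two_ne_zero
  have hqD : ∀ s ∈ I, DifferentiableAt ℝ q s := fun s hs => (hqC s hs).differentiableAt two_ne_zero
  have hqV : ∀ s ∈ I, h (q s) ∈ V := fun s hs => hbij.mapsTo (hqU s hs)
  -- derivative of g inverts derivative of h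
  have hDgh : ∀ x ∈ U, ∀ v, fderiv ℝ g (h x) (fderiv ℝ h x v) = v := by
    intro x hx v
    have h3 : HasFDerivAt (g ∘ h) ((fderiv ℝ g (h x)).comp (fderiv ℝ h x)) x :=
      (hgD _ (hbij.mapsTo hx)).hasFDerivAt.comp x (hhD x hx).hasFDerivAt
    have h4 : g ∘ h =ᶠ[nhds x] id := by
      filter_upwards [hU.mem_nhds hx] with y hy using hgh y hy
    have h6 : (fderiv ℝ g (h x)).comp (fderiv ℝ h x) = ContinuousLinearMap.id ℝ _ :=
      (h3.congr_of_eventuallyEq h4.symm).unique (hasFDerivAt_id x)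
    simpa using congrArg (fun A : (Fin n → ℝ) →L[ℝ] (Fin n → ℝ) => A v) h6
  have hDhg : ∀ y ∈ V, ∀ v, fderiv ℝ h (g y) (fderiv ℝ g y v) = v := by
    intro y hy v
    have h3 : HasFDerivAt (h ∘ g) ((fderiv ℝ h (g y)).comp (fderiv ℝ g y)) y :=
      (hhD _ (hgV y hy)).hasFDerivAt.comp y (hgD y hy).hasFDerivAt
    have h4 : h ∘ g =ᶠ[nhds y] id := by
      filter_upwards [hV.mem_nhds hy] with z hz using hhg z hz
    have h6 : (fderiv ℝ h (g y)).comp (fderiv ℝ g y) = ContinuousLinearMap.id ℝ _ :=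
      (h3.congr_of_eventuallyEq h4.symm).unique (hasFDerivAt_id y)
    simpa using congrArg (fun A : (Fin n → ℝ) →L[ℝ] (Fin n → ℝ) => A v) h6
  have hjacinv : ∀ x ∈ U, (jac h x)⁻¹ = jac g (h x) := by
    intro x hx
    have hleft : jac g (h x) * jac h x = 1 := by
      apply Matrix.ext; intro i j
      have h1 : ((jac g (h x) * jac h x).mulVec (Pi.single j 1)) i = (Pi.single j 1 : Fin n → ℝ) i := by
        rw [← Matrix.mulVec_mulVec, jac_mulVec, jac_mulVec, hDgh x hx]
      simpa [Matrix.mulVec_single, Matrix.one_apply, Pi.single_apply] using h1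
    exact Matrix.inv_eq_left_inv hleft
  -- velocity of q is C¹ on I
  have hq'eq : deriv q = fun s => fderiv ℝ q s 1 := by
    funext s; rw [fderiv_apply_one_eq_deriv]
  have hq'C : ∀ s ∈ I, ContDiffAt ℝ 1 (deriv q) s := by
    intro s hs
    rw [hq'eq]
    exact ((hqC s hs).fderiv_right (by norm_num)).clm_apply contDiffAt_const
  have hq'D : ∀ s ∈ I, DifferentiableAt ℝ (deriv q) s :=
    fun s hs => (hq'C s hs).differentiableAt one_ne_zero
  have hLd : Differentiable ℝ (Function.uncurry L) := hL.differentiable two_ne_zero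
  have hL1 : ContDiff ℝ 1 (fderiv ℝ (Function.uncurry L)) := hL.fderiv_right (by norm_num)
  set Ψ : ℝ → ((Fin n → ℝ) × (Fin n → ℝ)) →L[ℝ] ℝ :=
    fun s => fderiv ℝ (Function.uncurry L) (q s, deriv q s) with hΨdef
  have hΨD : DifferentiableAt ℝ Ψ t :=
    ((hL1.differentiable one_ne_zero) _).comp t ((hqD t ht).prodMk (hq'D t ht))
  have hΨt' : HasDerivAt Ψ (deriv Ψ t) t := hΨD.hasDerivAt
  set Ψ' := deriv Ψ t with hΨ'def
  have hLpart : ∀ x v : Fin n → ℝ, DifferentiableAt ℝ (fun w => L x w) v := fun x v =>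
    ((hLd (x, v)).hasFDerivAt.comp v (hasFDerivAt_prodMk_right x v)).differentiableAt
  have hFeq : (fun s => grad (fun w => L (q s) w) (deriv q s))
      = fun s i => Ψ s ((0 : Fin n → ℝ), Pi.single i 1) := by
    funext s i
    show fderiv ℝ (fun w => L (q s) w) (deriv q s) (Pi.single i 1) = _
    rw [fderiv_partial_snd (hLd _)]
    simp
    rfl
  have hpD : HasDerivAt (fun s i => Ψ s ((0 : Fin n → ℝ), Pi.single i 1))
      (fun i => Ψ' ((0 : Fin n → ℝ), Pi.single i 1)) t := by
    rw [hasDerivAt_pi]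
    intro i
    simpa using hΨt'.clm_apply
      (hasDerivAt_const t ((0 : Fin n → ℝ), (Pi.single i 1 : Fin n → ℝ)))
  -- the transformed curve
  set θ : ℝ → Fin n → ℝ := fun s => h (q s) with hθdef
  have hθD : ∀ s ∈ I, HasDerivAt θ (fderiv ℝ h (q s) (deriv q s)) s := fun s hs =>
    (hhD _ (hqU s hs)).hasFDerivAt.comp_hasDerivAt s (hqD s hs).hasDerivAt
  have hθ'eq : ∀ s ∈ I, deriv θ s = fderiv ℝ h (q s) (deriv q s) :=
    fun s hs => (hθD s hs).deriv
  set w : Fin n → ℝ := fderiv ℝ h (q t) (deriv q t) with hwdef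
  set Φ : ℝ → (Fin n → ℝ) →L[ℝ] (Fin n → ℝ) := fun s => fderiv ℝ g (θ s) with hΦdef
  have hgC1 : ContDiffAt ℝ 1 (fderiv ℝ g) (θ t) := (hgC _ (hqV t ht)).fderiv_right (by norm_num)
  set S := fderiv ℝ (fderiv ℝ g) (θ t) with hSdef
  have hSF : HasFDerivAt (fderiv ℝ g) S (θ t) := (hgC1.differentiableAt one_ne_zero).hasFDerivAt
  have hΦD : HasDerivAt Φ (S w) t := hSF.comp_hasDerivAt t (hθD t ht)
  have hsymm : ∀ v u, S v u = S u v := fun v u =>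
    ((hgC _ (hqV t ht)).isSymmSndFDerivAt (by simp)) v u
  -- momentum of the transformed Lagrangian along the curve, on I
  have hFθeq : ∀ s ∈ I, grad (fun w => Lθ (θ s) w) (deriv θ s)
      = fun j => Ψ s ((0 : Fin n → ℝ), Φ s (Pi.single j 1)) := by
    intro s hs
    have hqs := hqU s hs
    have hLθs : (fun w => Lθ (θ s) w) = fun v => L (q s) (Φ s v) := by
      funext v
      have e1 : g (θ s) = q s := hgh _ hqs
      rw [hLθ, e1, hjacinv _ hqs, jac_mulVec]
    funext j
    show fderiv ℝ (fun w => Lθ (θ s) w) (deriv θ s) (Pi.single j 1) = _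
    rw [hLθs]
    have hcomp : HasFDerivAt (fun v => L (q s) (Φ s v))
        ((fderiv ℝ (fun w => L (q s) w) (Φ s (deriv θ s))).comp (Φ s)) (deriv θ s) :=
      (hLpart _ _).hasFDerivAt.comp _ (Φ s).hasFDerivAt
    rw [hcomp.fderiv]
    have e2 : Φ s (deriv θ s) = deriv q s := by
      rw [hθ'eq s hs]
      exact hDgh _ hqs _
    rw [ContinuousLinearMap.comp_apply, e2, fderiv_partial_snd (hLd _)]
    simp
    rfl
  have hpθD : HasDerivAt (fun s j => Ψ s ((0 : Fin n → ℝ), Φ s (Pi.single j 1)))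
      (fun j => Ψ' ((0 : Fin n → ℝ), Φ t (Pi.single j 1))
        + Ψ t ((0 : Fin n → ℝ), S w (Pi.single j 1))) t := by
    rw [hasDerivAt_pi]
    intro j
    have hu : HasDerivAt (fun s => ((0 : Fin n → ℝ), Φ s (Pi.single j 1)))
        ((0 : Fin n → ℝ), S w (Pi.single j 1)) t := by
      refine (hasDerivAt_const t (0 : Fin n → ℝ)).prodMk ?_
      simpa using hΦD.clm_apply (hasDerivAt_const t (Pi.single j 1 : Fin n → ℝ))
    exact hΨt'.clm_apply hu
  have hDLHS : deriv (fun s => grad (fun w => Lθ (θ s) w) (deriv θ s)) t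
      = fun j => Ψ' ((0 : Fin n → ℝ), Φ t (Pi.single j 1))
        + Ψ t ((0 : Fin n → ℝ), S w (Pi.single j 1)) := by
    have heq : (fun s => grad (fun w => Lθ (θ s) w) (deriv θ s))
        =ᶠ[nhds t] fun s j => Ψ s ((0 : Fin n → ℝ), Φ s (Pi.single j 1)) := by
      filter_upwards [hI.mem_nhds ht] with s hs using hFθeq s hs
    rw [heq.deriv_eq, hpθD.deriv]
  have hgradθ : grad (fun x => Lθ x (deriv θ t)) (θ t)
      = fun j => Ψ t (Φ t (Pi.single j 1), S (Pi.single j 1) w) := by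
    have hwt : deriv θ t = w := hθ'eq t ht
    rw [hwt]
    have heq : (fun x => Lθ x w) =ᶠ[nhds (θ t)] fun x => L (g x) (fderiv ℝ g x w) := by
      filter_upwards [hV.mem_nhds (hqV t ht)] with y hy
      rw [hLθ, hjacinv _ (hgV y hy), hhg y hy, jac_mulVec]
    funext j
    show fderiv ℝ (fun x => Lθ x w) (θ t) (Pi.single j 1) = _
    rw [heq.fderiv_eq]
    have hinner : HasFDerivAt (fun x => (g x, fderiv ℝ g x w))
        ((Φ t).prod ((ContinuousLinearMap.apply ℝ (Fin n → ℝ) w).comp S)) (θ t) :=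
      ((hgD _ (hqV t ht)).hasFDerivAt).prodMk
        (((ContinuousLinearMap.apply ℝ (Fin n → ℝ) w).hasFDerivAt).comp _ hSF)
    have e3 : g (θ t) = q t := hgh _ (hqU t ht)
    have e4 : fderiv ℝ g (θ t) w = deriv q t := hDgh _ (hqU t ht) _
    have hcomp : HasFDerivAt (fun x => L (g x) (fderiv ℝ g x w))
        ((Ψ t).comp ((Φ t).prod
          ((ContinuousLinearMap.apply ℝ (Fin n → ℝ) w).comp S))) (θ t) := by
      have h5 := (hLd (g (θ t), fderiv ℝ g (θ t) w)).hasFDerivAt.comp (θ t) hinner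
      rw [e3, e4] at h5
      exact h5
    rw [hcomp.fderiv]
    simp [ContinuousLinearMap.comp_apply, ContinuousLinearMap.prod_apply,
      ContinuousLinearMap.apply_apply]
  have hELL : τ t = fun i => Ψ' ((0 : Fin n → ℝ), Pi.single i 1) - Ψ t (Pi.single i 1, 0) := by
    rw [← hEL t ht]
    show deriv (fun s => grad (fun w => L (q s) w) (deriv q s)) t
        - grad (fun x => L x (deriv q t)) (q t) = _
    rw [hFeq, hpD.deriv]
    funext i
    simp only [Pi.sub_apply]
    congr 1
    show fderiv ℝ (fun x => L x (deriv q t)) (q t) (Pi.single i 1) = _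
    rw [fderiv_partial_fst (hLd _)]
    simp
    rfl
  -- assemble
  show deriv (fun s => grad (fun w => Lθ (θ s) w) (deriv θ s)) t
      - grad (fun x => Lθ x (deriv θ t)) (θ t) = _
  rw [hDLHS, hgradθ, hELL]
  have hmat : ((jac h (q t))ᵀ)⁻¹ = (jac g (θ t))ᵀ := by
    rw [← Matrix.transpose_nonsing_inv, hjacinv _ (hqU t ht)]
  rw [hmat]
  funext j
  simp only [Pi.sub_apply]
  have hsplit : Ψ t (Φ t (Pi.single j 1), S (Pi.single j 1) w)
      = Ψ t (Φ t (Pi.single j 1), 0) + Ψ t ((0 : Fin n → ℝ), S w (Pi.single j 1)) := by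
    rw [hsymm (Pi.single j 1) w]
    rw [show ((Φ t (Pi.single j 1), S w (Pi.single j 1))
          : (Fin n → ℝ) × (Fin n → ℝ))
        = (Φ t (Pi.single j 1), (0 : Fin n → ℝ))
          + ((0 : Fin n → ℝ), S w (Pi.single j 1)) by simp [Prod.ext_iff]]
    exact map_add _ _ _
  have hrhs : ((jac g (θ t))ᵀ.mulVec
        (fun i => Ψ' ((0 : Fin n → ℝ), Pi.single i 1) - Ψ t (Pi.single i 1, 0))) j
      = Ψ' ((0 : Fin n → ℝ), Φ t (Pi.single j 1)) - Ψ t (Φ t (Pi.single j 1), 0) := by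
    rw [clm_expand_snd Ψ' (Φ t (Pi.single j 1)), clm_expand_fst (Ψ t) (Φ t (Pi.single j 1)),
      ← Finset.sum_sub_distrib]
    simp only [Matrix.mulVec, dotProduct, Matrix.transpose_apply, jac, Matrix.of_apply,
      mul_sub]
    rfl
  rw [hrhs, hsplit]
  ring
end

section
/- Let d > 0 and let A(q) ∈ Matrix 6 3 ℝ be the tendon actuation matrix of the two-segment piecewise-constant-curvature soft robot, with rows: row 1 = (−d cos q₂, d(½cos q₂ − (√3/2)sin q₂), d(½cos q₂ + (√3/2)sin q₂)); row 2 = (d q₁ sin q₂, −d q₁(½sin q₂ + (√3/2)cos q₂), −d q₁(½sin q₂ − (√3/2)cos q₂)); row 3 = (1, 1, 1); rows 4–6 equal rows 1–3 with (q₁, q₂) replaced by (q₄, q₅). Then rank A(q) = 3 for every q ∈ ℝ⁶ except exactly when q₁ = q₄ = 0 and q₂ = q₅ + kπ for some integer k, in which case rank A(q) < 3. (Rank claim of Example 4.) -/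
open Matrix Real

/-- The 6×3 tendon actuation matrix of the two-segment piecewise-constant-
curvature soft robot (Example 4), `q = (κ₁, φ₁, δL₁, κ₂, φ₂, δL₂)`. -/
noncomputable def pccActuation (d : ℝ) (q : Fin 6 → ℝ) : Matrix (Fin 6) (Fin 3) ℝ :=
  Matrix.of
    ![![-d * cos (q 1),
        d * (1 / 2 * cos (q 1) - Real.sqrt 3 / 2 * sin (q 1)),
        d * (1 / 2 * cos (q 1) + Real.sqrt 3 / 2 * sin (q 1))],
      ![d * q 0 * sin (q 1),
        -(d * q 0) * (1 / 2 * sin (q 1) + Real.sqrt 3 / 2 * cos (q 1)),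
        -(d * q 0) * (1 / 2 * sin (q 1) - Real.sqrt 3 / 2 * cos (q 1))],
      ![1, 1, 1],
      ![-d * cos (q 4),
        d * (1 / 2 * cos (q 4) - Real.sqrt 3 / 2 * sin (q 4)),
        d * (1 / 2 * cos (q 4) + Real.sqrt 3 / 2 * sin (q 4))],
      ![d * q 3 * sin (q 4),
        -(d * q 3) * (1 / 2 * sin (q 4) + Real.sqrt 3 / 2 * cos (q 4)),
        -(d * q 3) * (1 / 2 * sin (q 4) - Real.sqrt 3 / 2 * cos (q 4))],
      ![1, 1, 1]]

lemma rank_eq_three_of_ker (A : Matrix (Fin 6) (Fin 3) ℝ)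
    (h : ∀ u : Fin 3 → ℝ, A.mulVec u = 0 → u = 0) : A.rank = 3 := by
  have hk : LinearMap.ker A.mulVecLin = ⊥ :=
    LinearMap.ker_eq_bot'.mpr fun u hu => h u hu
  have h2 := LinearMap.finrank_range_add_finrank_ker A.mulVecLin
  rw [hk, finrank_bot] at h2
  simpa [Matrix.rank, Module.finrank_fintype_fun_eq_card] using h2

lemma rank_lt_three_of_ker (A : Matrix (Fin 6) (Fin 3) ℝ)
    (u : Fin 3 → ℝ) (hu : A.mulVec u = 0) (hne : u ≠ 0) : A.rank < 3 := by
  have h2 := LinearMap.finrank_range_add_finrank_ker A.mulVecLin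
  have hpos : 0 < Module.finrank ℝ (LinearMap.ker A.mulVecLin) := by
    refine Module.finrank_pos_iff.mpr ⟨⟨u, ?_⟩, 0, ?_⟩
    · simpa [LinearMap.mem_ker] using hu
    · simp [hne, Subtype.ext_iff]
  rw [Module.finrank_fintype_fun_eq_card] at h2
  simp only [Fintype.card_fin] at h2
  have : Matrix.rank A = Module.finrank ℝ (LinearMap.range A.mulVecLin) := rfl
  omega

lemma cons_val_five' {α : Type*} {m : ℕ} (x : α) (u : Fin (m+5) → α) :
    Matrix.vecCons x u 5 = u 4 := rfl

lemma ker_of_rows (A : Matrix (Fin 6) (Fin 3) ℝ) (f : Fin 3 → Fin 6)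
    (hdet : (A.submatrix f id).det ≠ 0) :
    ∀ u : Fin 3 → ℝ, A.mulVec u = 0 → u = 0 := by
  intro u hu
  refine Matrix.eq_zero_of_mulVec_eq_zero hdet ?_
  have : (A.submatrix f id).mulVec u = (A.mulVec u) ∘ f := rfl
  rw [this, hu]
  rfl

/-- **Rank claim of Example 4.**  The 6×3 tendon actuation matrix of the
two-segment piecewise-constant-curvature soft robot has rank 3 for every
configuration, except exactly when `q₁ = q₄ = 0` and `q₂ = q₅ + kπ` for some
integer `k`, in which case its rank drops below 3. -/
theorem pcc_soft_robot_actuation_rank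
    (d : ℝ) (hd : 0 < d) :
    ∀ q : Fin 6 → ℝ,
      ((pccActuation d q).rank = 3 ↔
        ¬ (q 0 = 0 ∧ q 3 = 0 ∧ ∃ k : ℤ, q 1 = q 4 + k * Real.pi)) ∧
      ((q 0 = 0 ∧ q 3 = 0 ∧ ∃ k : ℤ, q 1 = q 4 + k * Real.pi) →
        (pccActuation d q).rank < 3) := by
  intro q
  -- the degenerate direction
  have hdeg : (q 0 = 0 ∧ q 3 = 0 ∧ ∃ k : ℤ, q 1 = q 4 + k * Real.pi) →
      (pccActuation d q).rank < 3 := by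
    rintro ⟨h0, h3, k, hk⟩
    set u : Fin 3 → ℝ :=
      ![Real.sqrt 3 * sin (q 1),
        (-(Real.sqrt 3 * sin (q 1)) - 3 * cos (q 1)) / 2,
        (-(Real.sqrt 3 * sin (q 1)) + 3 * cos (q 1)) / 2] with hu_def
    have hsin : sin (q 4) * cos (q 1) - cos (q 4) * sin (q 1) = 0 := by
      have : sin (q 4 - q 1) = 0 := by
        rw [hk]
        have : q 4 - (q 4 + k * Real.pi) = (-k : ℤ) * Real.pi := by push_cast; ring
        rw [this, Real.sin_int_mul_pi]
      rw [Real.sin_sub] at this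
      linarith
    apply rank_lt_three_of_ker _ u
    · funext i
      fin_cases i <;>
        simp [pccActuation, hu_def, Matrix.mulVec, dotProduct,
          Fin.sum_univ_three, h0, h3, cons_val_five'] <;>
        ring_nf
      linear_combination (d * 3 * Real.sqrt 3 / 2) * hsin
    · intro hzero
      have e0 : Real.sqrt 3 * sin (q 1) = 0 := congrFun hzero 0
      have e1 : (-(Real.sqrt 3 * sin (q 1)) - 3 * cos (q 1)) / 2 = 0 := congrFun hzero 1
      have hs3 : Real.sqrt 3 ≠ 0 := by positivity
      have hsq : sin (q 1) = 0 := by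
        rcases mul_eq_zero.mp e0 with h | h
        · exact absurd h hs3
        · exact h
      have hcq : cos (q 1) = 0 := by
        rw [hsq] at e1; linarith [e1]
      have := sin_sq_add_cos_sq (q 1)
      rw [hsq, hcq] at this; norm_num at this
  refine ⟨⟨fun hr hdc => absurd hr (Nat.ne_of_lt (hdeg hdc)), ?_⟩, hdeg⟩
  intro hnd
  by_cases h0 : q 0 = 0
  · by_cases h3 : q 3 = 0
    · have hk : ¬ ∃ k : ℤ, q 1 = q 4 + k * Real.pi := fun hk => hnd ⟨h0, h3, hk⟩
      apply rank_eq_three_of_ker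
      apply ker_of_rows _ ![0, 3, 2]
      have hdet : ((pccActuation d q).submatrix ![0,3,2] id).det
          = d ^ 2 * (3 * Real.sqrt 3 / 2) * sin (q 4 - q 1) := by
        rw [Matrix.det_fin_three]
        simp [pccActuation, Matrix.submatrix_apply, cons_val_five']
        linear_combination (-(d ^ 2 * (3 * Real.sqrt 3 / 2))) * Real.sin_sub (q 4) (q 1)
      rw [hdet]
      have hsin : sin (q 4 - q 1) ≠ 0 := by
        intro hs
        have : sin (q 1 - q 4) = 0 := by
          rw [show q 1 - q 4 = -(q 4 - q 1) by ring, Real.sin_neg, hs, neg_zero]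
        obtain ⟨n, hn⟩ := Real.sin_eq_zero_iff.mp this
        exact hk ⟨n, by linarith⟩
      have : d ^ 2 * (3 * Real.sqrt 3 / 2) ≠ 0 := by positivity
      exact mul_ne_zero this hsin
    · apply rank_eq_three_of_ker
      apply ker_of_rows _ ![3, 4, 5]
      have hdet : ((pccActuation d q).submatrix ![3,4,5] id).det
          = d ^ 2 * q 3 * (3 * Real.sqrt 3 / 2) := by
        rw [Matrix.det_fin_three]
        simp [pccActuation, Matrix.submatrix_apply, cons_val_five']
        linear_combination (d ^ 2 * q 3 * (3 * Real.sqrt 3 / 2)) * sin_sq_add_cos_sq (q 4)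
      rw [hdet]
      positivity
  · apply rank_eq_three_of_ker
    apply ker_of_rows _ ![0, 1, 2]
    have hdet : ((pccActuation d q).submatrix ![0,1,2] id).det
        = d ^ 2 * q 0 * (3 * Real.sqrt 3 / 2) := by
      rw [Matrix.det_fin_three]
      simp [pccActuation, Matrix.submatrix_apply, cons_val_five']
      linear_combination (d ^ 2 * q 0 * (3 * Real.sqrt 3 / 2)) * sin_sq_add_cos_sq (q 1)
    rw [hdet]
    positivity
end
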